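/- Let n ≥ 2 be a natural number, let ρ be a complex number and let x > 0 be a real number. Then the Riemann–Liouville fractional derivative of order 1/n of h_{1/n}(·, ρ) at x, namely the derivative at x of the function y ↦ (1/Γ(1−1/n)) · ∫_0^y (y−t)^{−1/n} · h_{1/n}(t, ρ) dt, equals ρ · h_{1/n}(x, ρ). -/

import Mathlib

open MeasureTheory


lemma gamma_growth {x δ : ℝ} (hx : 1 < x) (hδ : 0 < δ) (hδ1 : δ < 1) :
    Real.Gamma x * (x + δ - 1) ^ δ ≤ Real.Gamma (x + δ) := by
  have h1 : 0 < x + δ - 1 := by linarith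
  have h2 : 0 < Real.Gamma (x + δ) := Real.Gamma_pos_of_pos (by linarith)
  have key := Real.Gamma_mul_add_mul_le_rpow_Gamma_mul_rpow_Gamma
    (show 0 < x + δ by linarith) (show 0 < x + δ - 1 by linarith)
    (show 0 < 1 - δ by linarith) hδ (by ring)
  have e1 : (1 - δ) * (x + δ) + δ * (x + δ - 1) = x := by ring
  rw [e1] at key
  have e2 : Real.Gamma (x + δ) = (x + δ - 1) * Real.Gamma (x + δ - 1) := by
    have := Real.Gamma_add_one (ne_of_gt h1)
    rw [show x + δ - 1 + 1 = x + δ by ring] at this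
    exact this
  have hG1 : 0 < Real.Gamma (x + δ - 1) := Real.Gamma_pos_of_pos h1
  have e3 : Real.Gamma (x + δ - 1) = Real.Gamma (x + δ) / (x + δ - 1) := by
    rw [eq_div_iff h1.ne', e2]; ring
  rw [e3, Real.div_rpow h2.le h1.le] at key
  have hpow : 0 < (x + δ - 1) ^ δ := Real.rpow_pos_of_pos h1 δ
  calc Real.Gamma x * (x + δ - 1) ^ δ
      ≤ (Real.Gamma (x+δ) ^ (1-δ) * (Real.Gamma (x+δ) ^ δ / (x+δ-1) ^ δ)) * (x + δ - 1) ^ δ :=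
        mul_le_mul_of_nonneg_right key hpow.le
    _ = Real.Gamma (x+δ) ^ (1-δ) * Real.Gamma (x+δ) ^ δ := by
        field_simp
    _ = Real.Gamma (x+δ) := by
        rw [← Real.rpow_add h2]; norm_num

lemma summable_gamma_series (n : ℕ) (hn : 2 ≤ n) {c : ℝ} (hc : 0 ≤ c) {a : ℝ} (ha : 0 < a) :
    Summable (fun k : ℕ => c ^ k / Real.Gamma ((k : ℝ) / n + a)) := by
  have hn0 : (0:ℝ) < n := by positivity
  have hδ : 0 < 1 / (n:ℝ) := by positivity
  have hδ1 : 1 / (n:ℝ) < 1 := by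
    rw [div_lt_one hn0]; exact_mod_cast lt_of_lt_of_le one_lt_two hn
  rcases hc.eq_or_lt with rfl | hc'
  · apply (summable_nat_add_iff 1).mp
    simp only [zero_pow (Nat.succ_ne_zero _), zero_div]
    exact summable_zero
  have hB1 : (1:ℝ) ≤ max 1 (2 * c) := le_max_left _ _
  set B : ℝ := max 1 (2 * c) with hB
  have hB0 : (0:ℝ) < B := lt_of_lt_of_le one_pos hB1
  apply summable_of_ratio_norm_eventually_le (show (1:ℝ)/2 < 1 by norm_num)
  rw [Filter.eventually_atTop]
  refine ⟨⌈(n:ℝ) * (B ^ n + 1)⌉₊, fun k hk => ?_⟩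
  have hkk : (n:ℝ) * (B ^ n + 1) ≤ k := le_trans (Nat.le_ceil _) (by exact_mod_cast hk)
  have hBn : (0:ℝ) < B ^ n := pow_pos hB0 n
  have hk0 : (0:ℝ) ≤ (k:ℝ) / n := by positivity
  have hxB : B ^ n ≤ ((k:ℝ) / n + a) - 1 := by
    have h1 : B ^ n + 1 ≤ (k:ℝ) / n := (le_div_iff₀ hn0).mpr (by linarith [mul_comm (n:ℝ) (B ^ n + 1)])
    linarith
  set x : ℝ := (k:ℝ) / n + a with hx
  clear_value x
  have hx1 : 1 < x := by linarith
  have hGx : 0 < Real.Gamma x := Real.Gamma_pos_of_pos (by linarith)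
  have hGx' : 0 < Real.Gamma (x + 1 / n) := Real.Gamma_pos_of_pos (by linarith)
  have hkey : 2 * c * Real.Gamma x ≤ Real.Gamma (x + 1 / n) := by
    have h2c : 2 * c ≤ (x + 1/n - 1) ^ ((1:ℝ)/n) := by
      have hBle : B ≤ (x + 1/n - 1) ^ ((1:ℝ)/n) := by
        have hh : (B ^ n : ℝ) ≤ x + 1/n - 1 := by linarith
        calc B = ((B ^ n : ℝ)) ^ ((1:ℝ)/n) := by
                rw [← Real.rpow_natCast B n, ← Real.rpow_mul hB0.le]
                rw [mul_one_div, div_self (ne_of_gt hn0), Real.rpow_one]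
          _ ≤ (x + 1/n - 1) ^ ((1:ℝ)/n) :=
              Real.rpow_le_rpow (by positivity) hh (by positivity)
      linarith [le_max_right 1 (2*c)]
    calc 2 * c * Real.Gamma x ≤ (x + 1/n - 1) ^ ((1:ℝ)/n) * Real.Gamma x :=
          mul_le_mul_of_nonneg_right h2c hGx.le
      _ = Real.Gamma x * (x + 1/n - 1) ^ ((1:ℝ)/n) := mul_comm _ _
      _ ≤ Real.Gamma (x + 1/n) := gamma_growth hx1 hδ hδ1
  have hterm : ((k:ℝ)+1) / n + a = x + 1/n := by rw [hx]; field_simp; ring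
  rw [Real.norm_eq_abs, Real.norm_eq_abs, abs_of_nonneg (by positivity), abs_of_nonneg (by positivity)]
  push_cast
  rw [hterm]
  calc c ^ (k+1) / Real.Gamma (x + 1/n)
      ≤ c ^ (k+1) / (2 * c * Real.Gamma x) := by gcongr
    _ = 1 / 2 * (c ^ k / Real.Gamma x) := by
        rw [pow_succ]; field_simp


lemma betaIntegrable {a b y : ℝ} (ha : 0 < a) (hb : 0 < b) (hy : 0 < y) :
    IntervalIntegrable (fun t => t ^ (a-1) * (y - t) ^ (b-1)) MeasureTheory.volume 0 y := by
  have h2 : 0 < y/2 := by linarith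
  apply IntervalIntegrable.trans (b := y/2)
  · apply IntervalIntegrable.mul_continuousOn
    · exact intervalIntegral.intervalIntegrable_rpow' (by linarith)
    · apply ContinuousOn.rpow_const (continuousOn_const.sub continuousOn_id)
      intro t ht
      rw [Set.uIcc_of_le (by linarith : (0:ℝ) ≤ y/2)] at ht
      refine Or.inl fun h => ?_
      simp only [Pi.sub_apply, id_eq] at h
      nlinarith [ht.1, ht.2]
  · apply IntervalIntegrable.continuousOn_mul
    · have h0 : IntervalIntegrable (fun t : ℝ => t ^ (b-1)) MeasureTheory.volume 0 (y/2) :=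
        intervalIntegral.intervalIntegrable_rpow' (by linarith)
      have := h0.comp_sub_left y
      simpa [show y - 0 = y by ring, show y - y/2 = y/2 by ring] using this.symm
    · apply ContinuousOn.rpow_const continuousOn_id
      intro t ht
      rw [Set.uIcc_of_le (by linarith : y/2 ≤ y)] at ht
      refine Or.inl fun h => ?_
      simp only [id_eq] at h
      nlinarith [ht.1, ht.2]

lemma realBeta {a b y : ℝ} (ha : 0 < a) (hb : 0 < b) (hy : 0 < y) :
    ∫ t in (0:ℝ)..y, t ^ (a-1) * (y - t) ^ (b-1) =
      Real.Gamma a * Real.Gamma b / Real.Gamma (a+b) * y ^ (a+b-1) := by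
  have key := Complex.betaIntegral_scaled (a:ℂ) (b:ℂ) hy
  have hG : Complex.Gamma ((a:ℂ) + b) ≠ 0 := by
    rw [show ((a:ℂ) + b) = ((a+b : ℝ) : ℂ) by push_cast; ring, Complex.Gamma_ofReal]
    exact_mod_cast (Real.Gamma_pos_of_pos (by linarith)).ne'
  have hβ : Complex.betaIntegral (a:ℂ) (b:ℂ) =
      Complex.Gamma a * Complex.Gamma b / Complex.Gamma ((a:ℂ)+b) := by
    rw [eq_div_iff hG, mul_comm, ← Complex.Gamma_mul_Gamma_eq_betaIntegral
      (by simpa using ha) (by simpa using hb)]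
  rw [hβ] at key
  have hcast : ∫ t in (0:ℝ)..y, ((t ^ (a-1) * (y - t) ^ (b-1) : ℝ) : ℂ) =
      ∫ t in (0:ℝ)..y, (t:ℂ) ^ ((a:ℂ) - 1) * ((y:ℂ) - t) ^ ((b:ℂ) - 1) := by
    apply intervalIntegral.integral_congr
    intro t ht
    rw [Set.uIcc_of_le hy.le] at ht
    push_cast
    rw [Complex.ofReal_cpow ht.1 (a-1), Complex.ofReal_cpow (by linarith [ht.2] : (0:ℝ) ≤ y - t) (b-1)]
    push_cast
    ring
  rw [intervalIntegral.integral_ofReal] at hcast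
  have : ((∫ t in (0:ℝ)..y, t ^ (a-1) * (y - t) ^ (b-1) : ℝ) : ℂ) =
      ((Real.Gamma a * Real.Gamma b / Real.Gamma (a+b) * y ^ (a+b-1) : ℝ) : ℂ) := by
    rw [hcast, key]
    push_cast [Complex.ofReal_cpow hy.le, Complex.Gamma_ofReal]
    rw [show ((a:ℂ) + b) = ((a+b : ℝ) : ℂ) by push_cast; ring, Complex.Gamma_ofReal]
    ring
  exact_mod_cast this

/-- The shifted Mittag-Leffler function
`h_{1/n}(x, ρ) = ∑_{k=0}^∞ ρ^k · x^{(k+1)/n − 1} / Γ((k+1)/n)`. -/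
noncomputable def mlH (n : ℕ) (x : ℝ) (ρ : ℂ) : ℂ :=
  ∑' k : ℕ, ρ ^ k * ((x ^ (((k : ℝ) + 1) / (n : ℝ) - 1) : ℝ) : ℂ) /
    ((Real.Gamma (((k : ℝ) + 1) / (n : ℝ)) : ℝ) : ℂ)

lemma stepA (n : ℕ) (hn : 2 ≤ n) (ρ : ℂ) {y : ℝ} (hy : 0 < y) :
    ((1 / Real.Gamma (1 - 1 / (n : ℝ)) : ℝ) : ℂ) *
        ∫ t in (0 : ℝ)..y, (((y - t) ^ (-(1 / (n : ℝ))) : ℝ) : ℂ) * mlH n t ρ =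
      ∑' k : ℕ, ρ ^ k * ((y ^ ((k : ℝ) / (n : ℝ)) : ℝ) : ℂ) /
        ((Real.Gamma ((k : ℝ) / (n : ℝ) + 1) : ℝ) : ℂ) := by
  have hn0 : (0:ℝ) < n := by positivity
  have hn1 : 1 / (n:ℝ) < 1 := by
    rw [div_lt_one hn0]; exact_mod_cast lt_of_lt_of_le one_lt_two hn
  set b : ℝ := 1 - 1 / n with hbdef
  have hb : 0 < b := by simp only [hbdef]; linarith
  have hGb : 0 < Real.Gamma b := Real.Gamma_pos_of_pos hb
  have hak : ∀ k : ℕ, 0 < ((k:ℝ)+1)/n := fun k => by positivity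
  have hGak : ∀ k : ℕ, 0 < Real.Gamma (((k:ℝ)+1)/n) := fun k => Real.Gamma_pos_of_pos (hak k)
  set F : ℕ → ℝ → ℂ := fun k t => (ρ^k / ((Real.Gamma (((k:ℝ)+1)/n) : ℝ) : ℂ)) *
    ((t ^ (((k:ℝ)+1)/n - 1) * (y - t) ^ (b - 1) : ℝ) : ℂ) with hF
  have hFeq : ∀ t : ℝ, (((y - t) ^ (-(1 / (n:ℝ))) : ℝ) : ℂ) * mlH n t ρ = ∑' k, F k t := by
    intro t
    rw [mlH, ← tsum_mul_left]
    congr 1 with k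
    simp only [hF]
    have hbe : -(1/(n:ℝ)) = b - 1 := by simp [hbdef]
    rw [hbe]
    push_cast
    ring
  have hInt : ∀ k : ℕ, IntegrableOn (F k) (Set.Ioc 0 y) volume := by
    intro k
    have h1 : IntegrableOn (fun t : ℝ => t ^ (((k:ℝ)+1)/n - 1) * (y - t) ^ (b - 1))
        (Set.Ioc 0 y) volume := by
      rw [← intervalIntegrable_iff_integrableOn_Ioc_of_le hy.le]
      exact betaIntegrable (hak k) hb hy
    exact (h1.ofReal.const_mul _)
  have hVal : ∀ k : ℕ, ∫ t in Set.Ioc 0 y, F k t =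
      (ρ^k / ((Real.Gamma (((k:ℝ)+1)/n) : ℝ) : ℂ)) *
      ((Real.Gamma (((k:ℝ)+1)/n) * Real.Gamma b / Real.Gamma (((k:ℝ)+1)/n + b) *
        y ^ (((k:ℝ)+1)/n + b - 1) : ℝ) : ℂ) := by
    intro k
    simp only [hF]
    rw [MeasureTheory.integral_const_mul]
    congr 1
    rw [← intervalIntegral.integral_of_le hy.le, intervalIntegral.integral_ofReal,
      realBeta (hak k) hb hy]
  have hNormSum : Summable (fun k : ℕ => ∫ t in Set.Ioc 0 y, ‖F k t‖) := by
    have heq : ∀ k : ℕ, ∫ t in Set.Ioc 0 y, ‖F k t‖ =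
        (‖ρ‖^k / Real.Gamma (((k:ℝ)+1)/n)) *
        (Real.Gamma (((k:ℝ)+1)/n) * Real.Gamma b / Real.Gamma (((k:ℝ)+1)/n + b) *
          y ^ (((k:ℝ)+1)/n + b - 1)) := by
      intro k
      have hno : ∀ t ∈ Set.Ioc (0:ℝ) y, ‖F k t‖ =
          (‖ρ‖^k / Real.Gamma (((k:ℝ)+1)/n)) *
          (t ^ (((k:ℝ)+1)/n - 1) * (y - t) ^ (b - 1)) := by
        intro t ht
        simp only [hF, norm_mul, norm_div, norm_pow, Complex.norm_real, Real.norm_eq_abs,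
          abs_of_pos (hGak k), abs_of_nonneg (Real.rpow_nonneg ht.1.le _),
          abs_of_nonneg (Real.rpow_nonneg (by linarith [ht.2] : (0:ℝ) ≤ y - t) _),
          abs_of_nonneg (mul_nonneg (Real.rpow_nonneg ht.1.le _)
            (Real.rpow_nonneg (by linarith [ht.2] : (0:ℝ) ≤ y - t) _))]
      rw [setIntegral_congr_fun measurableSet_Ioc hno, MeasureTheory.integral_const_mul,
        ← intervalIntegral.integral_of_le hy.le, realBeta (hak k) hb hy]
    rw [funext heq]
    have hsimp : ∀ k : ℕ, (‖ρ‖^k / Real.Gamma (((k:ℝ)+1)/n)) *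
        (Real.Gamma (((k:ℝ)+1)/n) * Real.Gamma b / Real.Gamma (((k:ℝ)+1)/n + b) *
          y ^ (((k:ℝ)+1)/n + b - 1)) =
        Real.Gamma b * ((‖ρ‖ * y ^ (1/(n:ℝ)))^k / Real.Gamma ((k:ℝ)/n + 1)) := by
      intro k
      have e1 : ((k:ℝ)+1)/n + b = (k:ℝ)/n + 1 := by
        simp only [hbdef]; field_simp; ring
      have e2 : ((k:ℝ)+1)/n + b - 1 = (k:ℝ)/n := by rw [e1]; ring
      rw [e2, e1]
      have e3 : y ^ ((k:ℝ)/n) = (y ^ (1/(n:ℝ)))^k := by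
        rw [← Real.rpow_natCast (y ^ (1/(n:ℝ))) k, ← Real.rpow_mul hy.le]
        congr 1
        field_simp
      rw [e3, mul_pow]
      field_simp [(hGak k).ne']
    rw [funext hsimp]
    exact ((summable_gamma_series n hn (by positivity) one_pos).mul_left _)
  have hswap : ∫ t in Set.Ioc 0 y, (∑' k, F k t) = ∑' k, ∫ t in Set.Ioc 0 y, F k t :=
    (MeasureTheory.integral_tsum_of_summable_integral_norm hInt hNormSum).symm
  have hterm : ∀ k : ℕ, ∫ t in Set.Ioc 0 y, F k t =
      ((Real.Gamma b : ℝ) : ℂ) * (ρ ^ k * ((y ^ ((k : ℝ) / (n : ℝ)) : ℝ) : ℂ) /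
        ((Real.Gamma ((k : ℝ) / (n : ℝ) + 1) : ℝ) : ℂ)) := by
    intro k
    rw [hVal k]
    have e1 : ((k:ℝ)+1)/n + b = (k:ℝ)/n + 1 := by
      simp only [hbdef]; field_simp; ring
    have e2 : ((k:ℝ)+1)/n + b - 1 = (k:ℝ)/n := by rw [e1]; ring
    rw [e2, e1]
    have hGa : ((Real.Gamma (((k:ℝ)+1)/n) : ℝ) : ℂ) ≠ 0 := by
      exact_mod_cast (hGak k).ne'
    have alg : ∀ (r A B G Y : ℂ), A ≠ 0 → r / A * (A * B / G * Y) = B * (r * Y / G) := by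
      intro r A B G Y hA
      rcases eq_or_ne G 0 with rfl | hG
      · simp
      · field_simp
    push_cast
    exact alg _ _ _ _ _ hGa
  calc ((1 / Real.Gamma b : ℝ) : ℂ) *
        ∫ t in (0 : ℝ)..y, (((y - t) ^ (-(1 / (n : ℝ))) : ℝ) : ℂ) * mlH n t ρ
      = ((1 / Real.Gamma b : ℝ) : ℂ) * ∑' k, ∫ t in Set.Ioc 0 y, F k t := by
        rw [intervalIntegral.integral_of_le hy.le]
        rw [setIntegral_congr_fun measurableSet_Ioc (fun t _ => hFeq t), hswap]
    _ = ((1 / Real.Gamma b : ℝ) : ℂ) * (((Real.Gamma b : ℝ) : ℂ) *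
          ∑' k : ℕ, ρ ^ k * ((y ^ ((k : ℝ) / (n : ℝ)) : ℝ) : ℂ) /
            ((Real.Gamma ((k : ℝ) / (n : ℝ) + 1) : ℝ) : ℂ)) := by
        rw [tsum_congr hterm, tsum_mul_left]
    _ = ∑' k : ℕ, ρ ^ k * ((y ^ ((k : ℝ) / (n : ℝ)) : ℝ) : ℂ) /
        ((Real.Gamma ((k : ℝ) / (n : ℝ) + 1) : ℝ) : ℂ) := by
        rw [← mul_assoc, ← Complex.ofReal_mul, one_div, inv_mul_cancel₀ hGb.ne']
        simp

lemma stepB (n : ℕ) (hn : 2 ≤ n) (ρ : ℂ) {x : ℝ} (hx : 0 < x) :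
    HasDerivAt (fun y : ℝ => ∑' k : ℕ, ρ ^ k * ((y ^ ((k : ℝ) / (n : ℝ)) : ℝ) : ℂ) /
        ((Real.Gamma ((k : ℝ) / (n : ℝ) + 1) : ℝ) : ℂ))
      (ρ * mlH n x ρ) x := by
  have hn0 : (0:ℝ) < n := by positivity
  set c : ℝ := ‖ρ‖ * (x+1) ^ (1/(n:ℝ)) with hc
  have hc0 : 0 ≤ c := by positivity
  set g : ℕ → ℝ → ℂ := fun k y => ρ ^ k * ((y ^ ((k : ℝ) / (n : ℝ)) : ℝ) : ℂ) /
    ((Real.Gamma ((k : ℝ) / (n : ℝ) + 1) : ℝ) : ℂ) with hg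
  set g' : ℕ → ℝ → ℂ := fun k y => ρ ^ k * ((((k : ℝ) / (n : ℝ)) * y ^ ((k : ℝ) / (n : ℝ) - 1) : ℝ) : ℂ) /
    ((Real.Gamma ((k : ℝ) / (n : ℝ) + 1) : ℝ) : ℂ) with hg'
  set u : ℕ → ℝ := fun k => (2/x) * (c ^ k / Real.Gamma ((k:ℝ)/n)) with hu
  -- summability of u
  have husum : Summable u := by
    apply (summable_nat_add_iff 1).mp
    have : ∀ k : ℕ, u (k+1) = ((2/x) * c) * (c ^ k / Real.Gamma ((k:ℝ)/n + 1/n)) := by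
      intro k
      simp only [hu]
      rw [show ((k:ℕ)+1 : ℕ) = k+1 from rfl]
      push_cast
      rw [show ((k:ℝ)+1)/n = (k:ℝ)/n + 1/n by field_simp]
      rw [pow_succ]
      ring
    rw [funext this]
    exact (summable_gamma_series n hn hc0 (by positivity)).mul_left _
  -- derivative of each term
  have hderiv : ∀ (k : ℕ) (y : ℝ), y ∈ Set.Ioo (x/2) (x+1) → HasDerivAt (g k) (g' k y) y := by
    intro k y hy
    have hy0 : 0 < y := lt_trans (by positivity) hy.1
    have h1 : HasDerivAt (fun y : ℝ => y ^ ((k : ℝ) / (n : ℝ)))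
        (((k : ℝ) / (n : ℝ)) * y ^ ((k : ℝ) / (n : ℝ) - 1)) y :=
      Real.hasDerivAt_rpow_const (Or.inl hy0.ne')
    exact ((h1.ofReal_comp.const_mul (ρ ^ k)).div_const _)
  -- norm bound
  have hbound : ∀ (k : ℕ) (y : ℝ), y ∈ Set.Ioo (x/2) (x+1) → ‖g' k y‖ ≤ u k := by
    intro k y hy
    have hy0 : 0 < y := lt_trans (by positivity) hy.1
    rcases Nat.eq_zero_or_pos k with rfl | hk
    · simp only [hg', hu, Nat.cast_zero, zero_div, zero_mul, Complex.ofReal_zero, mul_zero,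
        Real.Gamma_zero, div_zero, mul_zero, norm_zero, zero_div]
      simp [Real.Gamma_zero]
    · have hs : 0 < (k:ℝ)/n := by positivity
      have hGs : 0 < Real.Gamma ((k:ℝ)/n) := Real.Gamma_pos_of_pos hs
      have hGs1 : Real.Gamma ((k:ℝ)/n + 1) = ((k:ℝ)/n) * Real.Gamma ((k:ℝ)/n) :=
        Real.Gamma_add_one hs.ne'
      have hnorm : ‖g' k y‖ = ‖ρ‖^k * (y ^ ((k:ℝ)/n - 1) / Real.Gamma ((k:ℝ)/n)) := by
        simp only [hg', norm_div, norm_mul, norm_pow, Complex.norm_real, Real.norm_eq_abs]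
        rw [hGs1, abs_of_nonneg (Nat.cast_nonneg k : (0:ℝ) ≤ (k:ℕ)), abs_of_pos hn0,
          abs_of_nonneg (Real.rpow_nonneg hy0.le _),
          abs_of_pos (by positivity : (0:ℝ) < ((k:ℝ)/n) * Real.Gamma ((k:ℝ)/n))]
        rw [mul_div_assoc, mul_div_mul_left _ _ hs.ne']
      rw [hnorm]
      simp only [hu]
      have hyk : y ^ ((k:ℝ)/n - 1) ≤ (2/x) * (x+1) ^ ((k:ℝ)/n) := by
        rw [Real.rpow_sub_one hy0.ne']
        have h2 : y ^ ((k:ℝ)/n) ≤ (x+1) ^ ((k:ℝ)/n) :=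
          Real.rpow_le_rpow hy0.le (by linarith [hy.2]) hs.le
        have h3 : y ^ ((k:ℝ)/n) / y ≤ (x+1) ^ ((k:ℝ)/n) / (x/2) := by
          apply div_le_div₀ (by positivity) h2 (by positivity) (le_of_lt hy.1)
        calc y ^ ((k:ℝ)/n) / y ≤ (x+1) ^ ((k:ℝ)/n) / (x/2) := h3
          _ = (2/x) * (x+1) ^ ((k:ℝ)/n) := by field_simp
      have hck : c ^ k = ‖ρ‖^k * ((x+1) ^ ((k:ℝ)/n)) := by
        rw [hc, mul_pow, ← Real.rpow_natCast ((x+1) ^ (1/(n:ℝ))) k, ← Real.rpow_mul (by linarith)]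
        congr 2
        field_simp
      rw [hck]
      calc ‖ρ‖^k * (y ^ ((k:ℝ)/n - 1) / Real.Gamma ((k:ℝ)/n))
          ≤ ‖ρ‖^k * (((2/x) * (x+1) ^ ((k:ℝ)/n)) / Real.Gamma ((k:ℝ)/n)) := by
            gcongr
        _ = 2 / x * (‖ρ‖^k * ((x+1) ^ ((k:ℝ)/n)) / Real.Gamma ((k:ℝ)/n)) := by ring
  -- summability at x
  have hg0 : Summable (fun k => g k x) := by
    apply Summable.of_norm
    have : ∀ k : ℕ, ‖g k x‖ = (‖ρ‖ * x ^ (1/(n:ℝ)))^k / Real.Gamma ((k:ℝ)/n + 1) := by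
      intro k
      simp only [hg, norm_div, norm_mul, norm_pow, Complex.norm_real, Real.norm_eq_abs]
      rw [abs_of_nonneg (Real.rpow_nonneg hx.le _),
        abs_of_pos (Real.Gamma_pos_of_pos (by positivity : (0:ℝ) < (k:ℝ)/n + 1))]
      rw [mul_pow, ← Real.rpow_natCast (x ^ (1/(n:ℝ))) k, ← Real.rpow_mul hx.le]
      congr 3
      field_simp
    rw [funext this]
    exact summable_gamma_series n hn (by positivity) one_pos
  have hmem : x ∈ Set.Ioo (x/2) (x+1) := ⟨by linarith, by linarith⟩
  have hmain : HasDerivAt (fun y : ℝ => ∑' k, g k y) (∑' k, g' k x) x :=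
    hasDerivAt_tsum_of_isPreconnected husum isOpen_Ioo isPreconnected_Ioo
      hderiv hbound hmem hg0 hmem
  -- identify the derivative
  have hsum' : Summable (fun k => g' k x) :=
    Summable.of_norm_bounded husum (fun k => hbound k x hmem)
  have hid : (∑' k, g' k x) = ρ * mlH n x ρ := by
    rw [Summable.tsum_eq_zero_add hsum']
    have h0 : g' 0 x = 0 := by
      simp [hg']
    rw [h0, zero_add]
    have hterm : ∀ k : ℕ, g' (k+1) x =
        ρ * (ρ ^ k * ((x ^ (((k : ℝ) + 1) / (n : ℝ) - 1) : ℝ) : ℂ) /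
          ((Real.Gamma (((k : ℝ) + 1) / (n : ℝ)) : ℝ) : ℂ)) := by
      intro k
      simp only [hg']
      have hs : ((k:ℝ)+1)/n ≠ 0 := by positivity
      have hsne : ((((k:ℝ)+1)/n : ℝ) : ℂ) ≠ 0 := by exact_mod_cast hs
      have hcast : ((k+1 : ℕ) : ℝ) = (k:ℝ)+1 := by push_cast; ring
      rw [hcast, Real.Gamma_add_one hs, Complex.ofReal_mul, Complex.ofReal_mul,
        mul_div_assoc, mul_div_mul_left _ _ hsne, pow_succ]
      ring
    rw [tsum_congr hterm, tsum_mul_left, mlH]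
  rw [← hid]
  exact hmain

/-- The Riemann–Liouville fractional derivative of order `1/n` of `h_{1/n}(·, ρ)` at `x`
equals `ρ · h_{1/n}(x, ρ)`. -/
theorem stmt_5 (n : ℕ) (hn : 2 ≤ n) (ρ : ℂ) (x : ℝ) (hx : 0 < x) :
    HasDerivAt
      (fun y : ℝ => ((1 / Real.Gamma (1 - 1 / (n : ℝ)) : ℝ) : ℂ) *
        ∫ t in (0 : ℝ)..y, (((y - t) ^ (-(1 / (n : ℝ))) : ℝ) : ℂ) * mlH n t ρ)
      (ρ * mlH n x ρ) x := by
  apply (stepB n hn ρ hx).congr_of_eventuallyEq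
  filter_upwards [Ioi_mem_nhds hx] with y hy
  exact stepA n hn ρ hy
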